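/- Let G be a Cohen–Macaulay very well-covered graph on 2n vertices with the standard labeling, and let A ⊆ [n]. Then every minimal vertex cover of the induced subgraph G \ {x_i, y_i : i ∈ A} has cardinality n − |A|, i.e., the subgraph is again very well-covered. -/
import Mathlib


/-- A vertex cover: a set of vertices meeting every edge. -/
def IsVertexCover {V : Type*} (G : SimpleGraph V) (C : Set V) : Prop :=
  ∀ ⦃v w : V⦄, G.Adj v w → v ∈ C ∨ w ∈ C

/-- A minimal vertex cover: no proper subset is a vertex cover. -/
def IsMinimalVertexCover {V : Type*} (G : SimpleGraph V) (C : Set V) : Prop :=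
  IsVertexCover G C ∧ ∀ D : Set V, D ⊂ C → ¬ IsVertexCover G D

/-- An independent set: pairwise non-adjacent vertices. -/
def IsIndepSet {V : Type*} (G : SimpleGraph V) (S : Set V) : Prop :=
  ∀ ⦃v : V⦄, v ∈ S → ∀ ⦃w : V⦄, w ∈ S → ¬ G.Adj v w

/-- A maximal independent set: no proper superset is independent. -/
def IsMaximalIndepSet {V : Type*} (G : SimpleGraph V) (S : Set V) : Prop :=
  IsIndepSet G S ∧ ∀ T : Set V, IsIndepSet G T → S ⊆ T → S = T

/-- From minimality of a vertex cover, each member has a neighbor outside the cover. -/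
lemma exists_nbr_notin {V : Type*} (H : SimpleGraph V) {C : Set V}
    (hC : IsMinimalVertexCover H C) {a : V} (ha : a ∈ C) :
    ∃ u, H.Adj a u ∧ u ∉ C := by
  have hss : C \ {a} ⊂ C := Set.sdiff_singleton_ssubset.mpr ha
  have hnc := hC.2 (C \ {a}) hss
  unfold IsVertexCover at hnc
  push_neg at hnc
  obtain ⟨v, w, hadj, hv, hw⟩ := hnc
  rcases hC.1 hadj with hvc | hwc
  · have hva : v = a := by
      by_contra h
      exact hv ⟨hvc, h⟩
    subst hva
    refine ⟨w, hadj, ?_⟩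
    intro hwC
    have : w ≠ v := fun h => H.irrefl (h ▸ hadj)
    exact hw ⟨hwC, this⟩
  · have hwa : w = a := by
      by_contra h
      exact hw ⟨hwc, h⟩
    subst hwa
    refine ⟨v, hadj.symm, ?_⟩
    intro hvC
    have : v ≠ w := fun h => H.irrefl (h ▸ hadj)
    exact hv ⟨hvC, this⟩

/-- Lemma 3.3(b): deleting the pairs {x_i, y_i}, i ∈ A, from a Cohen–Macaulay very
well-covered graph yields a graph all of whose minimal vertex covers have size n - |A|. -/
theorem stmt_8 {n : ℕ} (G : SimpleGraph (Fin n ⊕ Fin n))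
    (h1 : IsMinimalVertexCover G (Set.range Sum.inl))
    (h2 : IsMaximalIndepSet G (Set.range Sum.inr))
    (h3 : ∀ i : Fin n, G.Adj (Sum.inl i) (Sum.inr i))
    (h4 : ∀ i j : Fin n, G.Adj (Sum.inl i) (Sum.inr j) → i ≤ j)
    (h5 : ∀ i j : Fin n, G.Adj (Sum.inl i) (Sum.inr j) → ¬ G.Adj (Sum.inl i) (Sum.inl j))
    (h6 : ∀ i j k : Fin n, i ≠ j → j ≠ k → i ≠ k →
      ∀ z ∈ ({Sum.inl i, Sum.inr i} : Set (Fin n ⊕ Fin n)),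
        G.Adj z (Sum.inl j) → G.Adj (Sum.inr j) (Sum.inl k) → G.Adj z (Sum.inl k))
    (A : Set (Fin n)) :
    ∀ C : Set ({v : Fin n ⊕ Fin n | Sum.elim id id v ∉ A}),
      IsMinimalVertexCover (G.induce {v : Fin n ⊕ Fin n | Sum.elim id id v ∉ A}) C →
        C.ncard = n - A.ncard := by
  set S : Set (Fin n ⊕ Fin n) := {v : Fin n ⊕ Fin n | Sum.elim id id v ∉ A} with hS
  set H := G.induce S with hH
  intro C hC
  -- membership helpers
  have hmemL : ∀ i : Fin n, i ∉ A → (Sum.inl i ∈ S) := fun i hi => hi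
  have hmemR : ∀ i : Fin n, i ∉ A → (Sum.inr i ∈ S) := fun i hi => hi
  -- at least one of each pair is in C
  have hone : ∀ (i : Fin n) (hi : i ∉ A),
      (⟨Sum.inl i, hmemL i hi⟩ : S) ∈ C ∨ (⟨Sum.inr i, hmemR i hi⟩ : S) ∈ C := by
    intro i hi
    exact hC.1 (show H.Adj ⟨Sum.inl i, _⟩ ⟨Sum.inr i, _⟩ from h3 i)
  -- not both
  have hnotboth : ∀ (i : Fin n) (hi : i ∉ A),
      ¬ ((⟨Sum.inl i, hmemL i hi⟩ : S) ∈ C ∧ (⟨Sum.inr i, hmemR i hi⟩ : S) ∈ C) := by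
    rintro i hi ⟨hx, hy⟩
    -- neighbor of y_i outside C
    obtain ⟨u, huadj, huC⟩ := exists_nbr_notin H hC hy
    obtain ⟨u', hu'adj, hu'C⟩ := exists_nbr_notin H hC hx
    have huG : G.Adj (Sum.inr i) u.1 := huadj
    have hu'G : G.Adj (Sum.inl i) u'.1 := hu'adj
    -- u must be some x_k
    obtain ⟨k, hk⟩ : ∃ k : Fin n, u.1 = Sum.inl k := by
      rcases u with ⟨val, hval⟩
      cases val with
      | inl k => exact ⟨k, rfl⟩
      | inr k =>
        exact absurd huG (h2.1 ⟨i, rfl⟩ ⟨k, rfl⟩)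
    have hkA : (k : Fin n) ∉ A := by
      have := u.2
      rw [hk] at this
      exact this
    have hyk : G.Adj (Sum.inr i) (Sum.inl k) := hk ▸ huG
    have hki : k ≠ i := by
      rintro rfl
      apply huC
      have : u = (⟨Sum.inl k, hmemL k hkA⟩ : S) := Subtype.ext hk
      rw [this]; exact hx
    have hukC : (⟨Sum.inl k, hmemL k hkA⟩ : S) ∉ C := by
      have : u = (⟨Sum.inl k, hmemL k hkA⟩ : S) := Subtype.ext hk
      rw [← this]; exact huC
    -- case on u'
    rcases u' with ⟨val', hval'⟩
    cases val' with
    | inl j =>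
      have hadjij : G.Adj (Sum.inl i) (Sum.inl j) := hu'G
      have hji : j ≠ i := fun h => G.irrefl (h ▸ hadjij)
      have hjA : (j : Fin n) ∉ A := hval'
      have hujC : (⟨Sum.inl j, hmemL j hjA⟩ : S) ∉ C := hu'C
      by_cases hjk : j = k
      · subst hjk
        exact h5 j i (hyk.symm) hadjij.symm
      · have : G.Adj (Sum.inl j) (Sum.inl k) :=
          h6 j i k hji (fun h => hki h.symm) hjk (Sum.inl j) (Or.inl rfl) hadjij.symm hyk
        have hHadj : H.Adj ⟨Sum.inl j, hmemL j hjA⟩ ⟨Sum.inl k, hmemL k hkA⟩ := this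
        rcases hC.1 hHadj with h | h
        · exact hujC h
        · exact hukC h
    | inr j =>
      have hadjij : G.Adj (Sum.inl i) (Sum.inr j) := hu'G
      have hjA : (j : Fin n) ∉ A := hval'
      have hujC : (⟨Sum.inr j, hmemR j hjA⟩ : S) ∉ C := hu'C
      have hji : j ≠ i := by
        rintro rfl
        exact hujC hy
      by_cases hjk : j = k
      · subst hjk
        have hHadj : H.Adj ⟨Sum.inl j, hmemL j hkA⟩ ⟨Sum.inr j, hmemR j hjA⟩ := h3 j
        rcases hC.1 hHadj with h | h
        · exact hukC h
        · exact hujC h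
      · have : G.Adj (Sum.inr j) (Sum.inl k) :=
          h6 j i k hji (fun h => hki h.symm) hjk (Sum.inr j) (Or.inr rfl) hadjij.symm hyk
        have hHadj : H.Adj ⟨Sum.inr j, hmemR j hjA⟩ ⟨Sum.inl k, hmemL k hkA⟩ := this
        rcases hC.1 hHadj with h | h
        · exact hujC h
        · exact hukC h
  -- index map
  set f : S → Fin n := fun c => Sum.elim id id c.1 with hf
  have hinj : Set.InjOn f C := by
    rintro ⟨v1, hv1⟩ hc1 ⟨v2, hv2⟩ hc2 heq
    cases v1 with
    | inl i =>
      cases v2 with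
      | inl i' =>
        simp only [hf, Sum.elim_inl, id] at heq
        subst heq; rfl
      | inr i' =>
        simp only [hf, Sum.elim_inl, Sum.elim_inr, id] at heq
        subst heq
        exact absurd ⟨hc1, hc2⟩ (hnotboth i hv1)
    | inr i =>
      cases v2 with
      | inl i' =>
        simp only [hf, Sum.elim_inl, Sum.elim_inr, id] at heq
        subst heq
        exact absurd ⟨hc2, hc1⟩ (hnotboth i hv1)
      | inr i' =>
        simp only [hf, Sum.elim_inr, id] at heq
        subst heq; rfl
  have himg : f '' C = Aᶜ := by
    apply Set.Subset.antisymm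
    · rintro _ ⟨⟨v, hv⟩, _, rfl⟩
      exact hv
    · intro i hi
      rcases hone i hi with h | h
      · exact ⟨_, h, rfl⟩
      · exact ⟨_, h, rfl⟩
  have h1' : C.ncard = (f '' C).ncard := (Set.ncard_image_of_injOn hinj).symm
  rw [h1', himg]
  have hcompl : A.ncard + Aᶜ.ncard = n := by
    have := Set.ncard_add_ncard_compl A
    simpa using this
  omega
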